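/- Let S ⊂ V = (Fin 6 → ZMod 2) be the 7-cap consisting of the six standard basis vectors e1, …, e6 together with the all-ones vector (1,1,1,1,1,1). Then the stabilizer {A ∈ GL(6, GF(2)) : A '' S = S} of S has order 5040. -/

import Mathlib

/-- The ambient 6-dimensional vector space over GF(2). -/
abbrev V : Type := Fin 6 → ZMod 2

/-- A cap in PG(5,2): a finite set of nonzero vectors of `V` no three pairwise
distinct elements of which sum to `0`. -/
def IsCap (S : Set V) : Prop :=
  S.Finite ∧ (∀ v ∈ S, v ≠ 0) ∧
    ∀ a ∈ S, ∀ b ∈ S, ∀ c ∈ S, a ≠ b → a ≠ c → b ≠ c → a + b + c ≠ 0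

/-- A cap is complete if it cannot be extended by any nonzero vector. -/
def IsCompleteCap (S : Set V) : Prop :=
  IsCap S ∧ ∀ v : V, v ≠ 0 → v ∉ S → ¬ IsCap (insert v S)

/-- Projective equivalence of caps: some linear automorphism of `V` maps one onto the other. -/
def ProjEquiv (S T : Set V) : Prop :=
  ∃ A : V ≃ₗ[ZMod 2] V, ⇑A '' S = T

/-- The `i`-th standard basis vector of `V`. -/
def e (i : Fin 6) : V := Pi.single i 1

/-- The seven points of the frame cap. -/
def f : Fin 7 → V := ![e 0, e 1, e 2, e 3, e 4, e 5, ![1,1,1,1,1,1]]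

lemma f_inj : Function.Injective f := by decide
lemma f_sum : ∑ i, f i = 0 := by decide
lemma f_castSucc (i : Fin 6) : f i.castSucc = e i := by fin_cases i <;> rfl
lemma f_last : f (Fin.last 6) = ∑ i : Fin 6, e i := by decide
lemma neg_self : ∀ x : V, -x = x := by decide

lemma range_f : Set.range f =
    ({e 0, e 1, e 2, e 3, e 4, e 5, ![1,1,1,1,1,1]} : Set V) := by
  ext x
  simp [f, Matrix.range_cons, Matrix.range_cons_empty, Set.singleton_union]
  tauto

/-- The linear endomorphism sending `e i` to `f (g i)`. -/
noncomputable def L (g : Fin 7 → Fin 7) : V →ₗ[ZMod 2] V :=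
  (Pi.basisFun (ZMod 2) (Fin 6)).constr (ZMod 2) (fun i => f (g i.castSucc))

lemma L_e (g : Fin 7 → Fin 7) (i : Fin 6) : L g (e i) = f (g i.castSucc) := by
  have h : e i = Pi.basisFun (ZMod 2) (Fin 6) i := by simp [e]
  rw [h]
  exact (Pi.basisFun (ZMod 2) (Fin 6)).constr_basis (ZMod 2) (fun i => f (g i.castSucc)) i

lemma L_f (σ : Equiv.Perm (Fin 7)) (j : Fin 7) : L σ (f j) = f (σ j) := by
  induction j using Fin.lastCases with
  | cast i => rw [f_castSucc, L_e]
  | last =>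
    rw [f_last, map_sum]
    have h1 : ∀ i : Fin 6, L σ (e i) = f (σ i.castSucc) := L_e σ
    simp_rw [h1]
    have h2 : (∑ i : Fin 6, f (σ i.castSucc)) + f (σ (Fin.last 6)) = 0 := by
      rw [← Fin.sum_univ_castSucc (f := fun j => f (σ j))]
      rw [Equiv.sum_comp σ f, f_sum]
    have := eq_neg_of_add_eq_zero_left h2
    rwa [neg_self] at this

lemma comp_eq_id (σ τ : Equiv.Perm (Fin 7)) (h : ∀ j, σ (τ j) = j) :
    (L σ).comp (L τ) = LinearMap.id := by
  apply (Pi.basisFun (ZMod 2) (Fin 6)).ext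
  intro i
  have hb : (Pi.basisFun (ZMod 2) (Fin 6)) i = e i := by simp [e]
  rw [hb]
  simp only [LinearMap.comp_apply, LinearMap.id_apply]
  rw [← f_castSucc i, L_f τ, L_f σ, h]

/-- The linear automorphism induced by a permutation of the seven frame points. -/
noncomputable def A (σ : Equiv.Perm (Fin 7)) : V ≃ₗ[ZMod 2] V :=
  LinearEquiv.ofLinear (L ⇑σ) (L ⇑(σ⁻¹))
    (comp_eq_id σ σ⁻¹ (fun j => σ.apply_symm_apply j))
    (comp_eq_id σ⁻¹ σ (fun j => σ.symm_apply_apply j))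

lemma A_f (σ : Equiv.Perm (Fin 7)) (j : Fin 7) : A σ (f j) = f (σ j) := L_f σ j

lemma A_image (σ : Equiv.Perm (Fin 7)) : ⇑(A σ) '' Set.range f = Set.range f := by
  rw [← Set.range_comp]
  have : ⇑(A σ) ∘ f = f ∘ σ := funext fun j => A_f σ j
  rw [this, Set.range_comp, σ.range_eq_univ, Set.image_univ]

/-- The stabilizer in GL(6,GF(2)) of the 7-cap consisting of the six standard basis
vectors together with the all-ones vector has order 5040. -/
theorem stabilizer_frame_cap :
    Set.ncard {A : V ≃ₗ[ZMod 2] V |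
      ⇑A '' ({e 0, e 1, e 2, e 3, e 4, e 5, ![1,1,1,1,1,1]} : Set V)
        = ({e 0, e 1, e 2, e 3, e 4, e 5, ![1,1,1,1,1,1]} : Set V)} = 5040 := by
  have hset : {B : V ≃ₗ[ZMod 2] V |
      ⇑B '' ({e 0, e 1, e 2, e 3, e 4, e 5, ![1,1,1,1,1,1]} : Set V)
        = ({e 0, e 1, e 2, e 3, e 4, e 5, ![1,1,1,1,1,1]} : Set V)} = Set.range A := by
    ext B
    simp only [Set.mem_setOf_eq, Set.mem_range, ← range_f]
    constructor
    · intro hB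
      have hmem : ∀ j, ∃ k, f k = B (f j) := by
        intro j
        have : B (f j) ∈ Set.range f := by
          rw [← hB]; exact ⟨f j, Set.mem_range_self j, rfl⟩
        exact this
      choose g hg using hmem
      have ginj : Function.Injective g := by
        intro a b hab
        refine f_inj (B.injective ?_)
        rw [← hg, ← hg, hab]
      let σ : Equiv.Perm (Fin 7) := Equiv.ofBijective g (Finite.injective_iff_bijective.mp ginj)
      refine ⟨σ, ?_⟩
      apply LinearEquiv.toLinearMap_injective
      apply (Pi.basisFun (ZMod 2) (Fin 6)).ext
      intro i
      have hb : (Pi.basisFun (ZMod 2) (Fin 6)) i = e i := by simp [e]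
      rw [hb]
      show A σ (e i) = B (e i)
      rw [← f_castSucc i, A_f σ, ← hg]
      rfl
    · rintro ⟨σ, rfl⟩
      exact A_image σ
  rw [hset, ← Nat.card_coe_set_eq]
  rw [Nat.card_range_of_injective (f := A) ?inj]
  · rw [Nat.card_eq_fintype_card, Fintype.card_perm, Fintype.card_fin]
    decide
  case inj =>
    intro σ τ h
    apply Equiv.ext
    intro j
    apply f_inj
    rw [← A_f σ j, ← A_f τ j, h]
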